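/- arXiv:1202.0199 — 2 statements merged into one kernel-verified Lean document; each statement's English description precedes it below -/
import Mathlib

section
/- Let α ≥ 1 and 0 ≤ j < 2^α. Then ∑_{m ≡ j (mod 2^α), 0 ≤ m ≤ n} (-1)^{(m-j)/2^α} binom(n,m) ≡ 0 (mod 2^{⌊n/2^α⌋}). -/
open Finset Polynomial

theorem forced_alternating_even_fleck (α : ℕ) (hα : 1 ≤ α) (j : ℕ) (hj : j < 2 ^ α)
    (n : ℕ) :
    (2 : ℤ) ^ (n / 2 ^ α) ∣
      ∑ m ∈ (Finset.range (n + 1)).filter (fun m => m % 2 ^ α = j),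
        (-1 : ℤ) ^ ((m - j) / 2 ^ α) * (n.choose m : ℤ) := by
  set q := 2 ^ α with hqdef
  have hq0 : 0 < q := pow_pos (by norm_num) α
  set Q : Polynomial ℤ := X ^ q + 1 with hQdef
  have hdegQ : Q.degree = q := by
    rw [hQdef, ← Polynomial.C_1]
    exact Polynomial.degree_X_pow_add_C hq0 1
  have hQm : Q.Monic := by
    apply Polynomial.monic_X_pow_add
    rw [Polynomial.degree_one]
    exact_mod_cast Nat.cast_pos.mpr hq0
  -- step A : (1+X)^q = Q + 2 * g0
  have hE : ∃ g0 : Polynomial ℤ, ((1 : Polynomial ℤ) + X) ^ q = Q + 2 * g0 := by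
    have h2 : (C (2 : ℤ)) ∣ (((1 : Polynomial ℤ) + X) ^ q - Q) := by
      rw [Polynomial.C_dvd_iff_dvd_coeff]
      intro i
      rw [Polynomial.coeff_sub, Polynomial.coeff_one_add_X_pow]
      rcases eq_or_ne i 0 with rfl | hi0
      · simp [hQdef, Polynomial.coeff_X_pow, hq0.ne, hq0.ne']
      rcases eq_or_ne i q with rfl | hiq
      · simp [hQdef, Polynomial.coeff_X_pow, Polynomial.coeff_one, hq0.ne']
      · have hcho : (2 : ℕ) ∣ q.choose i :=
          Nat.Prime.dvd_choose_pow Nat.prime_two hi0 hiq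
        have : ((q.choose i : ℤ)) - Q.coeff i = (q.choose i : ℤ) := by
          simp [hQdef, Polynomial.coeff_X_pow, Polynomial.coeff_one, hiq, hi0]
        rw [this]
        exact_mod_cast Int.natCast_dvd_natCast.mpr hcho
    obtain ⟨g0, hg0⟩ := h2
    refine ⟨g0, ?_⟩
    rw [← sub_eq_iff_eq_add', hg0]
    norm_num
  obtain ⟨g0, hg0⟩ := hE
  set k := n / q with hk
  set r := n % q with hr
  -- step B : Q ∣ (1+X)^n - 2^k * (g0^k * (1+X)^r)
  have hkey : Q ∣ ((1 : Polynomial ℤ) + X) ^ n - 2 ^ k * (g0 ^ k * (1 + X) ^ r) := by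
    have h1 : ((1 : Polynomial ℤ) + X) ^ n = (Q + 2 * g0) ^ k * (1 + X) ^ r := by
      rw [← hg0, ← pow_mul, ← pow_add]
      congr 1
      rw [hk, hr, Nat.div_add_mod]
    have h2 : Q ∣ (Q + 2 * g0) ^ k - (2 * g0) ^ k := by
      simpa using sub_dvd_pow_sub_pow (Q + 2 * g0) (2 * g0) k
    rw [h1]
    have heq : (Q + 2 * g0) ^ k * (1 + X) ^ r - 2 ^ k * (g0 ^ k * (1 + X) ^ r)
        = ((Q + 2 * g0) ^ k - (2 * g0) ^ k) * (1 + X) ^ r := by ring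
    rw [heq]
    exact h2.mul_right _
  -- step C : the remainder is 2^k times something
  have hmod : (((1 : Polynomial ℤ) + X) ^ n) %ₘ Q
      = ((2 : ℤ) ^ k) • ((g0 ^ k * (1 + X) ^ r) %ₘ Q) := by
    rw [Polynomial.modByMonic_eq_of_dvd_sub hQm hkey, ← Polynomial.smul_modByMonic]
    congr 1
    rw [Polynomial.smul_eq_C_mul, map_pow]
    norm_num
  -- step E : X^m %ₘ Q
  have hXm : ∀ m : ℕ, (X ^ m : Polynomial ℤ) %ₘ Q = ((-1 : ℤ) ^ (m / q)) • X ^ (m % q) := by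
    intro m
    have hdvd : Q ∣ (X ^ m : Polynomial ℤ) - ((-1 : ℤ) ^ (m / q)) • X ^ (m % q) := by
      have h2 : Q ∣ ((X ^ q : Polynomial ℤ)) ^ (m / q) - (-1) ^ (m / q) := by
        have := sub_dvd_pow_sub_pow (X ^ q : Polynomial ℤ) (-1) (m / q)
        simpa [hQdef, sub_neg_eq_add] using this
      have h1 : (X ^ m : Polynomial ℤ) - ((-1 : ℤ) ^ (m / q)) • X ^ (m % q)
          = ((X ^ q) ^ (m / q) - (-1) ^ (m / q)) * X ^ (m % q) := by
        have hx : (X ^ m : Polynomial ℤ) = (X ^ q) ^ (m / q) * X ^ (m % q) := by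
          rw [← pow_mul, ← pow_add, Nat.div_add_mod]
        rw [Polynomial.smul_eq_C_mul, map_pow, map_neg, map_one, hx]; ring
      rw [h1]
      exact h2.mul_right _
    rw [Polynomial.modByMonic_eq_of_dvd_sub hQm hdvd]
    apply (Polynomial.modByMonic_eq_self_iff hQm).2
    rw [hdegQ]
    calc (((-1 : ℤ) ^ (m / q)) • (X : Polynomial ℤ) ^ (m % q)).degree
        ≤ ((X : Polynomial ℤ) ^ (m % q)).degree := Polynomial.degree_smul_le _ _
      _ = (m % q : ℕ) := Polynomial.degree_X_pow _
      _ < (q : ℕ) := by exact_mod_cast Nat.mod_lt m hq0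
  -- step D : expand (1+X)^n and take coeff j
  have hexp : (((1 : Polynomial ℤ) + X) ^ n) %ₘ Q
      = ∑ m ∈ Finset.range (n + 1), ((n.choose m : ℤ) * (-1 : ℤ) ^ (m / q)) • X ^ (m % q) := by
    have h1 : ((1 : Polynomial ℤ) + X) ^ n
        = ∑ m ∈ Finset.range (n + 1), ((n.choose m : ℤ)) • X ^ m := by
      rw [add_comm, add_pow]
      refine Finset.sum_congr rfl fun m _ => ?_
      rw [Polynomial.smul_eq_C_mul]
      simp [Polynomial.C_eq_natCast]
      ring
    calc (((1 : Polynomial ℤ) + X) ^ n) %ₘ Q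
        = Q.modByMonicHom (∑ m ∈ Finset.range (n + 1), ((n.choose m : ℤ)) • X ^ m) := by
          rw [← h1]; rfl
      _ = ∑ m ∈ Finset.range (n + 1), ((n.choose m : ℤ)) • Q.modByMonicHom (X ^ m) := by
          rw [map_sum]
          exact Finset.sum_congr rfl fun m _ => by rw [map_smul]
      _ = ∑ m ∈ Finset.range (n + 1), ((n.choose m : ℤ) * (-1 : ℤ) ^ (m / q)) • X ^ (m % q) := by
          refine Finset.sum_congr rfl fun m _ => ?_
          have hmm : Q.modByMonicHom (X ^ m) = (X ^ m : Polynomial ℤ) %ₘ Q := rfl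
          rw [hmm, hXm m, smul_smul]
  -- coefficient extraction
  have hcoeff : ((((1 : Polynomial ℤ) + X) ^ n) %ₘ Q).coeff j
      = ∑ m ∈ (Finset.range (n + 1)).filter (fun m => m % q = j),
          (-1 : ℤ) ^ (m / q) * (n.choose m : ℤ) := by
    rw [hexp, Polynomial.finset_sum_coeff]
    rw [Finset.sum_filter]
    refine Finset.sum_congr rfl fun m _ => ?_
    rw [Polynomial.coeff_smul, Polynomial.coeff_X_pow]
    by_cases h : m % q = j
    · simp [h]; ring
    · simp [h]
      intro hc
      exact absurd hc.symm h
  -- sums agree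
  have hsum : ∑ m ∈ (Finset.range (n + 1)).filter (fun m => m % q = j),
        (-1 : ℤ) ^ ((m - j) / q) * (n.choose m : ℤ)
      = ∑ m ∈ (Finset.range (n + 1)).filter (fun m => m % q = j),
        (-1 : ℤ) ^ (m / q) * (n.choose m : ℤ) := by
    refine Finset.sum_congr rfl fun m hm => ?_
    have hmj : m % q = j := (Finset.mem_filter.mp hm).2
    have : (m - j) / q = m / q := by
      have h1 : m - j = q * (m / q) := by
        conv_lhs => rw [← Nat.div_add_mod m q, hmj]
        omega
      rw [h1, Nat.mul_div_cancel_left _ hq0]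
    rw [this]
  rw [hsum, ← hcoeff, hmod, Polynomial.coeff_smul]
  exact Dvd.intro _ rfl
end

section
/- (Fleck's congruence) If n, p are positive integers with p prime, and 0 ≤ j ≤ p-1, then ∑_{m ≡ j (mod p), 0 ≤ m ≤ n} (-1)^m binom(n,m) ≡ 0 (mod p^{⌊(n-1)/(p-1)⌋}). -/
open Finset Polynomial

lemma fleck_resid (p : ℕ) (hp : 2 ≤ p) (j : ℕ) (hj : j < p) (m : ℕ) :
    p ∣ (p-1)*j + m ↔ m % p = j := by
  have h1 : m % p = j ↔ (p:ℤ) ∣ (m : ℤ) - j := by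
    constructor
    · intro h
      refine ⟨(m / p : ℕ), ?_⟩
      have h4 : p * (m/p) + j = m := by
        have := Nat.div_add_mod m p; omega
      have h5 : ((p:ℤ)) * ((m/p : ℕ):ℤ) + j = m := by exact_mod_cast h4
      linarith
    · rintro ⟨c, hc⟩
      have h2 : (m:ℤ) % p = (j:ℤ) % p := by
        rw [show (m:ℤ) = j + p*c by linarith, Int.add_mul_emod_self_left]
      rw [show ((j:ℤ)) % p = j from Int.emod_eq_of_lt (by positivity) (by exact_mod_cast hj)] at h2
      have h3 : ((m % p : ℕ) : ℤ) = (m:ℤ) % p := by push_cast; ring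
      exact_mod_cast h3.trans h2
  rw [h1, ← Int.natCast_dvd_natCast]
  push_cast [Nat.one_le_iff_ne_zero.mpr (by omega : p ≠ 0)]
  have key : ((p:ℤ) - 1) * j + m = p * j + ((m:ℤ) - j) := by ring
  rw [key]
  exact Int.dvd_add_right ⟨j, rfl⟩

lemma fleck_geom {R : Type*} [CommRing R] [IsDomain R] [DecidableEq R] (p : ℕ) (w : R)
    (hw : w ^ p = 1) :
    (∑ k ∈ range p, w ^ k) = if w = 1 then (p : R) else 0 := by
  split_ifs with h
  · simp [h]
  · have h2 : (∑ k ∈ range p, w ^ k) * (w - 1) = 0 := by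
      rw [geom_sum_mul, hw, sub_self]
    rcases mul_eq_zero.mp h2 with h3 | h3
    · exact h3
    · exact absurd (sub_eq_zero.mp h3) h

section Extract
variable {R : Type*} [CommRing R] [IsDomain R] {p : ℕ} (hp : p.Prime)
  {ζ : R} (φ : R →+* ZMod p) (hφ : φ ζ = 1) (hpne : (p : R) ≠ 0)
  (hdvd : (p : R) ∣ (1 - ζ) ^ (p - 1))

omit [IsDomain R] in
include hp φ hφ in
lemma fleck_base (t : ℤ) (ht : (1 - ζ) ∣ (t : R)) : (p : ℤ) ∣ t := by
  obtain ⟨r, hr⟩ := ht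
  have h0 : ((t : ℤ) : ZMod p) = 0 := by
    have := congrArg φ hr
    rw [map_intCast, map_mul, map_sub, map_one, hφ, sub_self, zero_mul] at this
    exact this
  haveI : NeZero p := ⟨hp.ne_zero⟩
  exact (ZMod.intCast_zmod_eq_zero_iff_dvd t p).mp h0

include hp hφ hpne hdvd in
lemma fleck_extract (e : ℕ) (t : ℤ) (ht : (1 - ζ) ^ (e * (p - 1) + 1) ∣ (t : R)) :
    (p : ℤ) ^ (e + 1) ∣ t := by
  induction e generalizing t with
  | zero =>
    simpa using fleck_base hp φ hφ t (by simpa using ht)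
  | succ e ih =>
    have hpt : (p : ℤ) ∣ t :=
      fleck_base hp φ hφ t ((dvd_pow_self (1 - ζ) (Nat.succ_ne_zero _)).trans ht)
    obtain ⟨t', rfl⟩ := hpt
    obtain ⟨r, hr⟩ := ht
    obtain ⟨w, hw⟩ := hdvd
    have hsplit : (1 - ζ) ^ ((e + 1) * (p - 1) + 1)
        = (1 - ζ) ^ (e * (p - 1) + 1) * ((p : R) * w) := by
      rw [← hw, ← pow_add]
      congr 1
      have : (e+1)*(p-1) = e*(p-1)+(p-1) := by ring
      omega
    rw [hsplit] at hr
    have hcancel : (t' : R) = (1 - ζ) ^ (e * (p - 1) + 1) * (w * r) := by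
      apply mul_left_cancel₀ hpne
      push_cast at hr ⊢
      linear_combination hr
    have := ih t' ⟨w * r, hcancel⟩
    calc ((p:ℤ)) ^ (e + 1 + 1) = p ^ (e+1) * p := by ring
    _ ∣ t' * p := mul_dvd_mul_right this p
    _ = p * t' := by ring
    _ ∣ p * t' := dvd_rfl

end Extract
lemma fleck_identity {R : Type*} [CommRing R] [IsDomain R] {p : ℕ} (hp : p.Prime)
    {ζ : R} (hζ : IsPrimitiveRoot ζ p) (n j : ℕ) (hj : j < p) :
    (p : R) * ((∑ m ∈ (Finset.range (n + 1)).filter (fun m => m % p = j),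
        (-1 : ℤ) ^ m * (n.choose m : ℤ) : ℤ) : R)
      = ∑ k ∈ range p, ζ ^ (k * ((p-1) * j)) * (1 - ζ ^ k) ^ n := by
  classical
  have key : ∀ k ∈ range p, ζ ^ (k * ((p-1) * j)) * (1 - ζ ^ k) ^ n
      = ∑ m ∈ range (n+1), ((-1 : R) ^ m * (n.choose m : R)) * (ζ ^ ((p-1)*j+m)) ^ k := by
    intro k _
    have h1 : (1 - ζ ^ k) ^ n = ∑ m ∈ range (n+1), (-(ζ^k)) ^ m * (n.choose m : R) := by
      rw [show (1 : R) - ζ ^ k = -(ζ^k) + 1 by ring, add_pow]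
      simp
    rw [h1, Finset.mul_sum]
    refine Finset.sum_congr rfl fun m _ => ?_
    have h2 : (-(ζ^k)) ^ m = (-1:R)^m * ζ ^ (k*m) := by
      rw [neg_pow, ← pow_mul]
    have h3 : (ζ ^ ((p-1)*j+m)) ^ k = ζ ^ (k * ((p-1)*j)) * ζ ^ (k*m) := by
      rw [← pow_mul, ← pow_add]
      congr 1
      ring
    rw [h2, h3]
    ring
  rw [Finset.sum_congr rfl key, Finset.sum_comm]
  have inner : ∀ m ∈ range (n+1),
      ∑ k ∈ range p, ((-1 : R) ^ m * (n.choose m : R)) * (ζ ^ ((p-1)*j+m)) ^ k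
      = ((-1 : R) ^ m * (n.choose m : R)) * (if m % p = j then (p:R) else 0) := by
    intro m _
    rw [← Finset.mul_sum,
      fleck_geom p _ (by rw [← pow_mul, mul_comm, pow_mul, hζ.pow_eq_one, one_pow])]
    congr 2
    rw [hζ.pow_eq_one_iff_dvd, fleck_resid p hp.two_le j hj m]
  rw [Finset.sum_congr rfl inner]
  push_cast
  rw [Finset.sum_filter, Finset.mul_sum]
  refine Finset.sum_congr rfl fun m _ => ?_
  split_ifs <;> ring

section Inst
variable (p : ℕ) [hpf : Fact p.Prime]

noncomputable abbrev FleckR : Type := Polynomial ℤ ⧸ Ideal.span {Polynomial.cyclotomic p ℤ}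

lemma FleckR_span_prime : (Ideal.span {cyclotomic p ℤ}).IsPrime := by
  rw [Ideal.span_singleton_prime (cyclotomic_ne_zero p ℤ)]
  exact (UniqueFactorizationMonoid.irreducible_iff_prime).mp
    (cyclotomic.irreducible hpf.out.pos)

noncomputable instance : CommRing (FleckR p) := inferInstance

instance : IsDomain (FleckR p) := by
  haveI := FleckR_span_prime p
  exact Ideal.Quotient.isDomain _

noncomputable def fleckZ : FleckR p := Ideal.Quotient.mk _ (X : Polynomial ℤ)

omit hpf in
lemma fleck_mk_eq_aeval (q : Polynomial ℤ) :
    Ideal.Quotient.mk (Ideal.span {cyclotomic p ℤ}) q = aeval (fleckZ p) q := by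
  have : (Ideal.Quotient.mk (Ideal.span {cyclotomic p ℤ}))
      = ((aeval (fleckZ p)).toRingHom : Polynomial ℤ →+* FleckR p) := by
    apply Polynomial.ringHom_ext
    · intro a
      simp only [AlgHom.toRingHom_eq_coe, RingHom.coe_coe, aeval_C, algebraMap_int_eq,
        eq_intCast, C_eq_intCast, map_intCast]
    · simp [fleckZ]
  rw [this]
  rfl

lemma fleck_p_ne_zero : (p : FleckR p) ≠ 0 := by
  intro h
  have h2 : ((p : ℤ[X]) : Polynomial ℤ) ∈ Ideal.span {cyclotomic p ℤ} := by
    rwa [← map_natCast (Ideal.Quotient.mk (Ideal.span {cyclotomic p ℤ})),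
      Ideal.Quotient.eq_zero_iff_mem] at h
  rw [Ideal.mem_span_singleton] at h2
  have hne : ((p : ℤ[X])) ≠ 0 := by
    simpa using hpf.out.ne_zero
  have hdeg := Polynomial.natDegree_le_of_dvd h2 hne
  rw [natDegree_cyclotomic, Nat.totient_prime hpf.out] at hdeg
  have : (p : ℤ[X]).natDegree = 0 := natDegree_natCast p
  have h2 := hpf.out.two_le
  omega

instance : NeZero (p : FleckR p) := ⟨fleck_p_ne_zero p⟩

lemma fleck_primroot : IsPrimitiveRoot (fleckZ p) p := by
  rw [← isRoot_cyclotomic_iff (R := FleckR p)]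
  have : cyclotomic p (FleckR p) = (cyclotomic p ℤ).map (Int.castRingHom (FleckR p)) :=
    (map_cyclotomic_int p _).symm
  rw [IsRoot.def, this, eval_map, ← algebraMap_int_eq, ← aeval_def]
  exact (fleck_mk_eq_aeval p _).symm.trans
    ((Ideal.Quotient.eq_zero_iff_mem).mpr (Ideal.mem_span_singleton_self _))

noncomputable def fleckPhi : FleckR p →+* ZMod p :=
  Ideal.Quotient.lift _
    ((evalRingHom (1 : ZMod p)).comp (mapRingHom (Int.castRingHom (ZMod p))))
    (by
      intro a ha
      obtain ⟨b, rfl⟩ := Ideal.mem_span_singleton.mp ha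
      simp only [RingHom.comp_apply, coe_mapRingHom, Polynomial.map_mul, coe_evalRingHom,
        eval_mul, map_cyclotomic_int]
      rw [eval_one_cyclotomic_prime, ZMod.natCast_self, zero_mul])

lemma fleckPhi_z : fleckPhi p (fleckZ p) = 1 := by
  simp [fleckPhi, fleckZ]

lemma fleck_dvd_pow : (p : FleckR p) ∣ (1 - fleckZ p) ^ (p - 1) := by
  set q : Polynomial ℤ := (X - 1) ^ (p - 1) - cyclotomic p ℤ with hqdef
  have hcyc : cyclotomic p (ZMod p) = (X - 1) ^ (p - 1) := by
    have h1 : ¬ p ∣ 1 := by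
      rw [Nat.dvd_one]
      exact hpf.out.ne_one
    have := cyclotomic_mul_prime_eq_pow_of_not_dvd (ZMod p) (p := p) (n := 1) h1
    rwa [one_mul, cyclotomic_one] at this
  have hmap : q.map (Int.castRingHom (ZMod p)) = 0 := by
    rw [hqdef]
    rw [Polynomial.map_sub, Polynomial.map_pow, Polynomial.map_sub, map_X,
      Polynomial.map_one, map_cyclotomic_int, hcyc, sub_self]
  have hq : C (p : ℤ) ∣ q := by
    rw [C_dvd_iff_dvd_coeff]
    intro i
    have h0 : ((q.coeff i : ℤ) : ZMod p) = 0 := by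
      have := congrArg (fun r => Polynomial.coeff r i) hmap
      simpa [coeff_map] using this
    exact_mod_cast (ZMod.intCast_zmod_eq_zero_iff_dvd _ p).mp h0
  obtain ⟨b, hb⟩ := hq
  have hmk := congrArg (Ideal.Quotient.mk (Ideal.span {cyclotomic p ℤ})) hb
  rw [map_mul] at hmk
  have h1 : Ideal.Quotient.mk (Ideal.span {cyclotomic p ℤ}) q
      = (fleckZ p - 1) ^ (p - 1) := by
    rw [hqdef, map_sub, map_pow, map_sub, map_one,
      show (Ideal.Quotient.mk (Ideal.span {cyclotomic p ℤ})) X = fleckZ p from rfl,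
      show (Ideal.Quotient.mk (Ideal.span {cyclotomic p ℤ})) (cyclotomic p ℤ) = 0 from
        (Ideal.Quotient.eq_zero_iff_mem).mpr (Ideal.mem_span_singleton_self _),
      sub_zero]
  have h2 : Ideal.Quotient.mk (Ideal.span {cyclotomic p ℤ}) (C (p:ℤ)) = (p : FleckR p) := by
    rw [show (C ((p:ℕ):ℤ)) = ((p:ℕ) : ℤ[X]) by push_cast; rfl, map_natCast]
  have h3 : (p : FleckR p) ∣ (fleckZ p - 1) ^ (p - 1) := by
    rw [← h1, ← h2]
    exact ⟨_, hmk⟩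
  have h4 : (1 - fleckZ p) ^ (p - 1) = (-1 : FleckR p) ^ (p-1) * (fleckZ p - 1) ^ (p - 1) := by
    rw [← mul_pow]
    ring_nf
  rw [h4]
  exact h3.mul_left _

end Inst

section Main
variable {R : Type*} [CommRing R] [IsDomain R] {p : ℕ} (hp : p.Prime)
  {ζ : R} (φ : R →+* ZMod p) (hφ : φ ζ = 1) (hpne : (p : R) ≠ 0)
  (hdvd : (p : R) ∣ (1 - ζ) ^ (p - 1))

include hp hφ hpne hdvd in
lemma fleck_main (n : ℕ) (t : ℤ) (h : (1 - ζ) ^ n ∣ (p : R) * (t : R)) :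
    (p : ℤ) ^ ((n - 1) / (p - 1)) ∣ t := by
  rcases Nat.eq_zero_or_pos ((n - 1) / (p - 1)) with h0 | h0
  · rw [h0, pow_zero]
    exact one_dvd t
  · obtain ⟨e, he⟩ : ∃ e, (n - 1) / (p - 1) = e + 1 := ⟨(n - 1) / (p - 1) - 1, by omega⟩
    rw [he]
    have hn : 1 ≤ n := by
      rcases Nat.eq_zero_or_pos n with rfl | h1
      · simp at h0
      · exact h1
    have hmul := Nat.div_mul_le_self (n - 1) (p - 1)
    rw [he] at hmul
    have h2 : (e + 1) * (p - 1) = e * (p - 1) + (p - 1) := by ring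
    have hsplit : e * (p - 1) + 1 + (p - 1) ≤ n := by omega
    have h3 : (1 - ζ) ^ (e * (p - 1) + 1 + (p - 1)) ∣ (p : R) * (t : R) :=
      (pow_dvd_pow _ hsplit).trans h
    obtain ⟨r, hr⟩ := h3
    obtain ⟨w, hw⟩ := hdvd
    have hc : (t : R) = (1 - ζ) ^ (e * (p - 1) + 1) * (w * r) := by
      apply mul_left_cancel₀ hpne
      rw [hr, pow_add, hw]
      ring
    exact fleck_extract hp φ hφ hpne ⟨w, hw⟩ e t ⟨w * r, hc⟩

end Main

/-- Fleck's congruence. -/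
theorem fleck_congruence (n p : ℕ) (hn : 0 < n) (hp : p.Prime) (j : ℕ) (hj : j ≤ p - 1) :
    (p : ℤ) ^ ((n - 1) / (p - 1)) ∣
      ∑ m ∈ (Finset.range (n + 1)).filter (fun m => m % p = j),
        (-1 : ℤ) ^ m * (n.choose m : ℤ) := by
  haveI : Fact p.Prime := ⟨hp⟩
  have hj' : j < p := by have := hp.two_le; omega
  set S : ℤ := ∑ m ∈ (Finset.range (n + 1)).filter (fun m => m % p = j),
    (-1 : ℤ) ^ m * (n.choose m : ℤ) with hS
  have hid := fleck_identity hp (fleck_primroot p) n j hj'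
  have hdvdsum : (1 - fleckZ p) ^ n ∣ (p : FleckR p) * (S : FleckR p) := by
    rw [hid]
    apply Finset.dvd_sum
    intro k _
    apply Dvd.dvd.mul_left
    apply pow_dvd_pow_of_dvd
    exact ⟨∑ i ∈ range k, fleckZ p ^ i, by linear_combination geom_sum_mul (fleckZ p) k⟩
  exact fleck_main hp (fleckPhi p) (fleckPhi_z p) (fleck_p_ne_zero p) (fleck_dvd_pow p) n S hdvdsum
end
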